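/- Let a < b be real numbers, let n ≥ 1, and let V : [a, b] × ℝⁿ → ℝⁿ be continuous. Suppose y : [a, b) → ℝⁿ is differentiable with y'(τ) = V(τ, y(τ)) for all τ ∈ [a, b), and suppose the range of y is bounded. Then the limit L := lim_{τ → b⁻} y(τ) exists, and the extension ỹ : [a, b] → ℝⁿ of y with ỹ(b) = L is continuously differentiable on [a, b] (with one-sided derivatives at the endpoints) and satisfies ỹ'(τ) = V(τ, ỹ(τ)) for all τ ∈ [a, b], including ỹ'(b) = V(b, L). -/

import Mathlib

open Set Filter Topology Uniformity

/-- **Extension of bounded solutions to the endpoint.**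
Let `a < b`, `n ≥ 1`, and let `V : [a, b] × ℝⁿ → ℝⁿ` be continuous. Suppose
`y : [a, b) → ℝⁿ` is differentiable with `y' τ = V (τ, y τ)` on `[a, b)` and has bounded
range. Then `L := lim_{τ → b⁻} y τ` exists, and the extension `ỹ` of `y` to `[a, b]` with
`ỹ b = L` is continuously differentiable on `[a, b]` (derivatives at the endpoints being
one-sided) with `ỹ' τ = V (τ, ỹ τ)` for all `τ ∈ [a, b]`, including `ỹ' b = V (b, L)`. -/
theorem stmt_9 {n : ℕ} (hn : 1 ≤ n) (a b : ℝ) (hab : a < b)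
    (V : ℝ × EuclideanSpace ℝ (Fin n) → EuclideanSpace ℝ (Fin n))
    (hVcont : ContinuousOn V
      (Set.Icc a b ×ˢ (Set.univ : Set (EuclideanSpace ℝ (Fin n)))))
    (y : ℝ → EuclideanSpace ℝ (Fin n))
    (hy : ∀ τ ∈ Set.Ico a b, HasDerivWithinAt y (V (τ, y τ)) (Set.Ico a b) τ)
    (hbdd : Bornology.IsBounded (y '' Set.Ico a b)) :
    ∃ L : EuclideanSpace ℝ (Fin n),
      Filter.Tendsto y (nhdsWithin b (Set.Iio b)) (nhds L) ∧
      ∀ ytil : ℝ → EuclideanSpace ℝ (Fin n),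
        (∀ τ ∈ Set.Ico a b, ytil τ = y τ) → ytil b = L →
        (∀ τ ∈ Set.Icc a b, HasDerivWithinAt ytil (V (τ, ytil τ)) (Set.Icc a b) τ) ∧
        ContinuousOn (fun τ => V (τ, ytil τ)) (Set.Icc a b) := by
  -- a bound for the derivative
  have hK : IsCompact (closure (y '' Set.Ico a b)) := hbdd.isCompact_closure
  have hKV : IsCompact (Set.Icc a b ×ˢ closure (y '' Set.Ico a b)) := isCompact_Icc.prod hK
  obtain ⟨M, hM⟩ := hKV.exists_bound_of_continuousOn
    (hVcont.mono (fun p hp => ⟨hp.1, Set.mem_univ _⟩))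
  have hbound : ∀ τ ∈ Set.Ico a b, ‖V (τ, y τ)‖₊ ≤ M.toNNReal := by
    intro τ hτ
    rw [← NNReal.coe_le_coe, coe_nnnorm, Real.coe_toNNReal']
    exact le_trans (hM (τ, y τ) ⟨⟨hτ.1, hτ.2.le⟩, subset_closure ⟨τ, hτ, rfl⟩⟩)
      (le_max_left _ _)
  -- Lipschitz, hence uniformly continuous
  have hlip : LipschitzOnWith M.toNNReal y (Set.Ico a b) :=
    Convex.lipschitzOnWith_of_nnnorm_hasDerivWithin_le (convex_Ico a b) hy hbound
  -- the limit exists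
  have hFeq : 𝓝[Set.Ico a b] b = 𝓝[<] b := nhdsWithin_Ico_eq_nhdsLT hab
  have hF : (𝓝[Set.Ico a b] b).NeBot := by
    rw [hFeq]; infer_instance
  have hcauchy : Cauchy ((𝓝[Set.Ico a b] b).map y) := by
    constructor
    · exact hF.map y
    · rw [Filter.prod_map_map_eq]
      have h1 : (𝓝[Set.Ico a b] b) ×ˢ (𝓝[Set.Ico a b] b)
          ≤ 𝓤 ℝ ⊓ 𝓟 (Set.Ico a b ×ˢ Set.Ico a b) := by
        refine le_inf ?_ ?_
        · exact le_trans (Filter.prod_mono nhdsWithin_le_nhds nhdsWithin_le_nhds) cauchy_nhds.2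
        · rw [← Filter.prod_principal_principal]
          exact Filter.prod_mono (le_principal_iff.2 self_mem_nhdsWithin)
            (le_principal_iff.2 self_mem_nhdsWithin)
      exact le_trans (Filter.map_mono h1) hlip.uniformContinuousOn
  obtain ⟨L, hL⟩ := CompleteSpace.complete hcauchy
  have hLten : Tendsto y (𝓝[<] b) (𝓝 L) := by rw [← hFeq]; exact hL
  refine ⟨L, hLten, ?_⟩
  intro ytil hEq hb
  have key : ∀ τ ∈ Set.Icc a b, HasDerivWithinAt ytil (V (τ, ytil τ)) (Set.Icc a b) τ := by
    intro τ hτ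
    rcases eq_or_lt_of_le hτ.2 with h | h
    · -- τ = b : use the extension-of-derivative theorem
      subst h
      rw [hb]
      have hIoo : Set.Ioo a τ ∈ 𝓝[<] τ := Ioo_mem_nhdsLT hab
      have hderiv : ∀ x ∈ Set.Ioo a τ, HasDerivAt ytil (V (x, y x)) x := by
        intro x hx
        have hx' : HasDerivAt y (V (x, y x)) x :=
          (hy x ⟨hx.1.le, hx.2⟩).hasDerivAt
            (mem_nhds_iff.2 ⟨Set.Ioo a τ, Set.Ioo_subset_Ico_self, isOpen_Ioo, hx⟩)
        have hev : ytil =ᶠ[𝓝 x] y :=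
          Filter.eventuallyEq_of_mem (isOpen_Ioo.mem_nhds hx)
            (fun z hz => hEq z ⟨hz.1.le, hz.2⟩)
        exact hx'.congr_of_eventuallyEq hev
      have hdiff : DifferentiableOn ℝ ytil (Set.Ioo a τ) := fun x hx =>
        (hderiv x hx).differentiableAt.differentiableWithinAt
      have hcont : ContinuousWithinAt ytil (Set.Ioo a τ) τ := by
        have h2 : Tendsto ytil (𝓝[Set.Ioo a τ] τ) (𝓝 L) := by
          apply Tendsto.congr' _ (hLten.mono_left (nhdsWithin_mono τ Set.Ioo_subset_Iio_self))
          filter_upwards [self_mem_nhdsWithin] with x hx using (hEq x ⟨hx.1.le, hx.2⟩).symm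
        rw [ContinuousWithinAt, hb]; exact h2
      have hlim' : Tendsto (fun x => deriv ytil x) (𝓝[<] τ) (𝓝 (V (τ, L))) := by
        have hVc : ContinuousWithinAt V (Set.Icc a τ ×ˢ (Set.univ : Set _)) (τ, L) :=
          hVcont (τ, L) ⟨Set.right_mem_Icc.2 hab.le, trivial⟩
        have h1 : Tendsto (fun x => V (x, y x)) (𝓝[<] τ) (𝓝 (V (τ, L))) := by
          apply hVc.tendsto.comp
          rw [tendsto_nhdsWithin_iff]
          constructor
          · exact (tendsto_id.mono_left nhdsWithin_le_nhds).prodMk_nhds hLten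
          · filter_upwards [hIoo] with x hx using ⟨⟨hx.1.le, hx.2.le⟩, trivial⟩
        apply h1.congr'
        filter_upwards [hIoo] with x hx
        exact ((hderiv x hx).deriv).symm
      exact (hasDerivWithinAt_Iic_of_tendsto_deriv hdiff hcont hIoo hlim').mono
        Set.Icc_subset_Iic_self
    · -- τ < b
      have hτ' : τ ∈ Set.Ico a b := ⟨hτ.1, h⟩
      have hnhds : 𝓝[Set.Icc a b] τ = 𝓝[Set.Ico a b] τ := by
        rw [nhdsWithin_restrict' (Set.Icc a b) (Iio_mem_nhds h)]
        congr 1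
        ext x
        exact ⟨fun hx => ⟨hx.1.1, hx.2⟩, fun hx => ⟨⟨hx.1, hx.2.le⟩, hx.2⟩⟩
      have hder : HasDerivWithinAt y (V (τ, y τ)) (Set.Icc a b) τ :=
        (hy τ hτ').mono_of_mem_nhdsWithin (by rw [hnhds]; exact self_mem_nhdsWithin)
      have heq : ytil =ᶠ[𝓝[Set.Icc a b] τ] y := by
        rw [hnhds]
        filter_upwards [self_mem_nhdsWithin] with x hx using hEq x hx
      rw [hEq τ hτ']
      exact hder.congr_of_eventuallyEq heq (hEq τ hτ')
  have hcont_ytil : ContinuousOn ytil (Set.Icc a b) := fun τ hτ =>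
    (key τ hτ).continuousWithinAt
  refine ⟨key, ?_⟩
  exact hVcont.comp (continuousOn_id.prodMk hcont_ytil) (fun τ hτ => ⟨hτ, trivial⟩)
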